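/- Let V and Q₀ be real Hilbert spaces, a : V × V → ℝ a continuous symmetric bilinear form with a(v,v) ≥ α‖v‖² for all v ∈ V (α > 0), and b : V × Q₀ → ℝ a continuous bilinear form satisfying the inf-sup condition: there exists β > 0 such that sup_{v ∈ V, ‖v‖ ≤ 1} b(v,q) ≥ β‖q‖ for all q ∈ Q₀. Then for every f₀ ∈ V* and every φ₀ ∈ Q₀* there exists a unique pair (u₀,p₀) ∈ V × Q₀ such that a(u₀,v) − b(v,p₀) = f₀(v) for all v ∈ V and b(u₀,q) = φ₀(q) for all q ∈ Q₀. -/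

import Mathlib

open RealInnerProductSpace

/-- Brezzi's splitting lemma (well-posedness of the stationary saddle-point
problem). With `a` continuous, symmetric and coercive on `V` and `b` continuous and inf-sup
stable on `V × Q₀`, for all data `f₀ ∈ V*`, `φ₀ ∈ Q₀*` there is a unique pair
`(u₀, p₀) ∈ V × Q₀` with `a(u₀,v) − b(v,p₀) = f₀(v)` for all `v` and `b(u₀,q) = φ₀(q)`
for all `q`. -/
theorem stmt_7 {V Q₀ : Type*} [NormedAddCommGroup V] [InnerProductSpace ℝ V] [CompleteSpace V]
    [NormedAddCommGroup Q₀] [InnerProductSpace ℝ Q₀] [CompleteSpace Q₀]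
    (a : V →ₗ[ℝ] V →ₗ[ℝ] ℝ) (b : V →ₗ[ℝ] Q₀ →ₗ[ℝ] ℝ)
    (Ca Cb α β : ℝ) (hα : 0 < α) (hβ : 0 < β)
    (hsymm : ∀ u v : V, a u v = a v u)
    (ha : ∀ u v : V, |a u v| ≤ Ca * ‖u‖ * ‖v‖)
    (hacoer : ∀ v : V, α * ‖v‖ ^ 2 ≤ a v v)
    (hb : ∀ (v : V) (q : Q₀), |b v q| ≤ Cb * ‖v‖ * ‖q‖)
    (hinfsup : ∀ q : Q₀, β * ‖q‖ ≤ ⨆ v : {v : V // ‖v‖ ≤ 1}, b v.1 q) :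
    ∀ (f₀ : V →L[ℝ] ℝ) (φ₀ : Q₀ →L[ℝ] ℝ),
      ∃! up : V × Q₀,
        (∀ v : V, a up.1 v - b v up.2 = f₀ v) ∧ (∀ q : Q₀, b up.1 q = φ₀ q) := by
  intro f₀ φ₀
  -- continuous versions of the bilinear forms
  obtain ⟨aC, haCa⟩ : ∃ aC : V →L[ℝ] V →L[ℝ] ℝ, ∀ u v : V, aC u v = a u v :=
    ⟨LinearMap.mkContinuous₂ a Ca (fun u v => by simpa [Real.norm_eq_abs] using ha u v),
      fun u v => rfl⟩
  obtain ⟨bC, hbCb⟩ : ∃ bC : V →L[ℝ] Q₀ →L[ℝ] ℝ, ∀ (v : V) (q : Q₀), bC v q = b v q :=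
    ⟨LinearMap.mkContinuous₂ b Cb (fun v q => by simpa [Real.norm_eq_abs] using hb v q),
      fun v q => rfl⟩
  -- the operator E : Q₀ → V with ⟪E q, v⟫ = b v q
  obtain ⟨E, hEq⟩ : ∃ E : Q₀ →L[ℝ] V, ∀ (q : Q₀) (v : V), ⟪E q, v⟫ = b v q := by
    refine ⟨{ toFun := fun q => (InnerProductSpace.toDual ℝ V).symm (bC.flip q)
              map_add' := by intro q q'; simp [map_add]
              map_smul' := by intro c q; simp [map_smulₛₗ]
              cont := (InnerProductSpace.toDual ℝ V).symm.continuous.comp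
                bC.flip.continuous }, ?_⟩
    intro q v
    show ⟪(InnerProductSpace.toDual ℝ V).symm (bC.flip q), v⟫ = b v q
    rw [InnerProductSpace.toDual_symm_apply]
    exact hbCb v q
  clear hbCb bC hb
  -- E is bounded below
  haveI : Nonempty {v : V // ‖v‖ ≤ 1} := ⟨⟨0, by simp⟩⟩
  have hEb : ∀ q : Q₀, β * ‖q‖ ≤ ‖E q‖ := by
    intro q
    refine (hinfsup q).trans (ciSup_le fun v => ?_)
    calc b v.1 q = ⟪E q, v.1⟫ := (hEq q v.1).symm
      _ ≤ ‖E q‖ * ‖v.1‖ := real_inner_le_norm _ _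
      _ ≤ ‖E q‖ * 1 := mul_le_mul_of_nonneg_left v.2 (norm_nonneg _)
      _ = ‖E q‖ := mul_one _
  have hEinj : ∀ q : Q₀, E q = 0 → q = 0 := by
    intro q hq
    have h := hEb q
    rw [hq, norm_zero] at h
    have hq0 : ‖q‖ ≤ 0 := by nlinarith [norm_nonneg q]
    exact norm_le_zero_iff.mp hq0
  -- range of E is closed
  have hanti : AntilipschitzWith ⟨β⁻¹, (inv_pos.mpr hβ).le⟩ E := by
    apply ContinuousLinearMap.antilipschitz_of_bound
    intro q
    show ‖q‖ ≤ β⁻¹ * ‖E q‖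
    calc ‖q‖ = β⁻¹ * (β * ‖q‖) := by field_simp
      _ ≤ β⁻¹ * ‖E q‖ := mul_le_mul_of_nonneg_left (hEb q) (inv_pos.mpr hβ).le
  have hclosed : IsClosed (Set.range E) := hanti.isClosed_range E.uniformContinuous
  set K : Submodule ℝ V := LinearMap.range (E : Q₀ →ₗ[ℝ] V) with hK
  haveI : CompleteSpace K := hclosed.completeSpace_coe
  set Z : Submodule ℝ V := Kᗮ with hZ
  have hKZ : Zᗮ = K := by
    rw [hZ, Submodule.orthogonal_orthogonal]
  have hmemZ : ∀ v : V, v ∈ Z ↔ ∀ q : Q₀, b v q = 0 := by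
    intro v
    rw [hZ, Submodule.mem_orthogonal]
    constructor
    · intro h q
      rw [← hEq q v]
      exact h (E q) ⟨q, rfl⟩
    · rintro h u ⟨q, rfl⟩
      rw [ContinuousLinearMap.coe_coe, hEq q v]
      exact h q
  -- Step 1: solve b(uφ, q) = φ₀ q  via Lax–Milgram with the coercive form ⟪E·,E·⟫ on Q₀
  obtain ⟨uφ, h1⟩ : ∃ uφ : V, ∀ q : Q₀, b uφ q = φ₀ q := by
    obtain ⟨cC, hcCa⟩ : ∃ cC : Q₀ →L[ℝ] Q₀ →L[ℝ] ℝ, ∀ q q' : Q₀, cC q q' = ⟪E q, E q'⟫ :=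
      ⟨(innerSL ℝ).bilinearComp E E, fun q q' => rfl⟩
    have hcCcoer : IsCoercive cC := by
      refine ⟨β ^ 2, pow_pos hβ 2, fun q => ?_⟩
      have h1 : β * ‖q‖ ≤ ‖E q‖ := hEb q
      have h2 : (β * ‖q‖) * (β * ‖q‖) ≤ ‖E q‖ * ‖E q‖ :=
        mul_le_mul h1 h1 (by positivity) (norm_nonneg _)
      calc β ^ 2 * ‖q‖ * ‖q‖ = (β * ‖q‖) * (β * ‖q‖) := by ring
        _ ≤ ‖E q‖ * ‖E q‖ := h2
        _ = ⟪E q, E q⟫ := (real_inner_self_eq_norm_mul_norm (E q)).symm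
        _ = cC q q := (hcCa q q).symm
    obtain ⟨pφ, hpφ⟩ : ∃ pφ : Q₀, ∀ q : Q₀, cC pφ q = φ₀ q := by
      refine ⟨hcCcoer.continuousLinearEquivOfBilin.symm
        ((InnerProductSpace.toDual ℝ Q₀).symm φ₀), fun q => ?_⟩
      have h := hcCcoer.continuousLinearEquivOfBilin_apply
        (hcCcoer.continuousLinearEquivOfBilin.symm ((InnerProductSpace.toDual ℝ Q₀).symm φ₀)) q
      rw [ContinuousLinearEquiv.apply_symm_apply, InnerProductSpace.toDual_symm_apply] at h
      exact h.symm
    refine ⟨E pφ, fun q => ?_⟩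
    calc b (E pφ) q = ⟪E q, E pφ⟫ := (hEq q (E pφ)).symm
      _ = ⟪E pφ, E q⟫ := real_inner_comm _ _
      _ = cC pφ q := (hcCa pφ q).symm
      _ = φ₀ q := hpφ q
  -- Step 2: Lax–Milgram on Z for the form a
  obtain ⟨uz, huzZ, h2⟩ : ∃ uz : V, uz ∈ Z ∧ ∀ z ∈ Z, a uz z = f₀ z - a uφ z := by
    obtain ⟨aZ, haZa⟩ : ∃ aZ : Z →L[ℝ] Z →L[ℝ] ℝ, ∀ z z' : Z, aZ z z' = a z.1 z'.1 := by
      refine ⟨(aC.bilinearComp Z.subtypeL Z.subtypeL), fun z z' => ?_⟩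
      show aC z.1 z'.1 = a z.1 z'.1
      exact haCa z.1 z'.1
    have haZcoer : IsCoercive aZ := by
      refine ⟨α, hα, fun z => ?_⟩
      have h := hacoer z.1
      rw [pow_two] at h
      rw [haZa z z]
      simpa [mul_assoc] using h
    obtain ⟨fZ, hfZ⟩ : ∃ fZ : Z →L[ℝ] ℝ, ∀ z : Z, fZ z = f₀ z.1 - aC uφ z.1 :=
      ⟨(f₀ - aC uφ).comp Z.subtypeL, fun z => rfl⟩
    obtain ⟨w, hw⟩ : ∃ w : Z, ∀ z : Z, aZ w z = fZ z := by
      refine ⟨haZcoer.continuousLinearEquivOfBilin.symm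
        ((InnerProductSpace.toDual ℝ Z).symm fZ), fun z => ?_⟩
      have h := haZcoer.continuousLinearEquivOfBilin_apply
        (haZcoer.continuousLinearEquivOfBilin.symm ((InnerProductSpace.toDual ℝ Z).symm fZ)) z
      rw [ContinuousLinearEquiv.apply_symm_apply, InnerProductSpace.toDual_symm_apply] at h
      exact h.symm
    refine ⟨w.1, w.2, fun z hz => ?_⟩
    have h := hw ⟨z, hz⟩
    rw [haZa, hfZ] at h
    rw [h, haCa]
  set u : V := uφ + uz with hu
  have hbu : ∀ q : Q₀, b u q = φ₀ q := by
    intro q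
    have huz0 : ∀ q : Q₀, b uz q = 0 := (hmemZ uz).mp huzZ
    rw [hu]
    simp only [map_add, LinearMap.add_apply]
    rw [h1 q, huz0 q, add_zero]
  -- Step 3: recover the pressure
  obtain ⟨w, hwv⟩ : ∃ w : V, ∀ v : V, ⟪w, v⟫ = a u v - f₀ v := by
    refine ⟨(InnerProductSpace.toDual ℝ V).symm (aC u - f₀), fun v => ?_⟩
    rw [InnerProductSpace.toDual_symm_apply]
    simp [haCa]
  have hwZ : w ∈ Zᗮ := by
    rw [Submodule.mem_orthogonal]
    intro z hz
    rw [real_inner_comm, hwv z]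
    have hadd : a u z = a uφ z + a uz z := by
      rw [hu]; simp [map_add]
    rw [hadd, h2 z hz]; ring
  rw [hKZ] at hwZ
  obtain ⟨p₀, hp₀⟩ := hwZ
  have h3 : ∀ v : V, a u v - b v p₀ = f₀ v := by
    intro v
    have hbp : b v p₀ = ⟪w, v⟫ := by rw [← hp₀, ContinuousLinearMap.coe_coe, hEq]
    rw [hbp, hwv v]; ring
  -- uniqueness
  refine ⟨(u, p₀), ⟨h3, hbu⟩, ?_⟩
  rintro ⟨u', p'⟩ ⟨h3', hbu'⟩
  have hdZ : ∀ q : Q₀, b (u' - u) q = 0 := by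
    intro q
    simp only [map_sub, LinearMap.sub_apply]
    rw [hbu' q, hbu q, sub_self]
  have hdiff : ∀ v : V, a (u' - u) v = b v (p' - p₀) := by
    intro v
    have e1 := h3' v
    have e2 := h3 v
    simp only [map_sub, LinearMap.sub_apply] at *
    linarith [e1, e2]
  have hu'u : u' = u := by
    have hd := hdiff (u' - u)
    have hz : b (u' - u) (p' - p₀) = 0 := by
      rw [map_sub]
      rw [hdZ p', hdZ p₀, sub_self]
    rw [hz] at hd
    have hc := hacoer (u' - u)
    rw [hd] at hc
    have hle : ‖u' - u‖ ^ 2 ≤ 0 := by nlinarith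
    have hn0 : ‖u' - u‖ = 0 := by nlinarith [sq_nonneg ‖u' - u‖, norm_nonneg (u' - u)]
    have h0 : u' - u = 0 := norm_eq_zero.mp hn0
    exact sub_eq_zero.mp h0
  have hp'p : p' = p₀ := by
    have hE0 : E (p' - p₀) = 0 := by
      have hinner : ∀ v : V, ⟪E (p' - p₀), v⟫ = 0 := by
        intro v
        rw [hEq]
        have h := hdiff v
        rw [hu'u, sub_self, map_zero, LinearMap.zero_apply] at h
        exact h.symm
      exact inner_self_eq_zero.mp (hinner (E (p' - p₀)))
    exact sub_eq_zero.mp (hEinj _ hE0)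
  exact Prod.ext hu'u hp'p
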